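/- There exists an absolute constant c such that if p ≥ c·μ⁶·log^{1.5}(d)/d, then with probability at least 1 − 1/d over the random choice of Ω the following holds: every x ∈ B = {x ∈ ℝ^d : ‖x‖_∞ ≤ 2μ/√d, ‖x‖₂ ≤ 1} satisfying the second-order optimality condition (for all v ∈ ℝ^d, ‖P_Ω(vxᵀ + xvᵀ)‖_F² ≥ 2vᵀP_Ω(zzᵀ − xxᵀ)v) satisfies ‖x‖₂² ≥ 1/4. -/

import Mathlib

open Matrix Finset MeasureTheory
open scoped ENNReal

noncomputable section

/-- Euclidean norm of a finite real vector. -/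
def vnorm {n : ℕ} (x : Fin n → ℝ) : ℝ := Real.sqrt (∑ i, (x i) ^ 2)

/-- Frobenius norm of a matrix. -/
def frobNorm {m n : ℕ} (A : Matrix (Fin m) (Fin n) ℝ) : ℝ :=
  Real.sqrt (∑ i, ∑ j, (A i j) ^ 2)

/-- Outer product of two vectors, as a matrix. -/
def outer {n : ℕ} (x y : Fin n → ℝ) : Matrix (Fin n) (Fin n) ℝ := fun i j => x i * y j

/-- `P_Ω`: the sample `ω` assigns a Boolean to each (ordered) pair; the entry `(i,j)`
is observed iff the Boolean attached to the unordered pair `{i,j}` (encoded as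
`(min i j, max i j)`) is `true`.  This makes the observed set symmetric, with each
unordered pair included independently. -/
def projO {d : ℕ} (ω : Fin d × Fin d → Bool) (A : Matrix (Fin d) (Fin d) ℝ) :
    Matrix (Fin d) (Fin d) ℝ :=
  fun i j => if ω (min i j, max i j) then A i j else 0

/-- Gradient of the regularizer `R(x) = ∑ᵢ (|xᵢ| − α)⁴ 1_{|xᵢ| ≥ α}`. -/
def gradR {d : ℕ} (α : ℝ) (x : Fin d → ℝ) : Fin d → ℝ :=
  fun i => if α ≤ |x i| then 4 * (|x i| - α) ^ 3 * Real.sign (x i) else 0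

/-- Hessian quadratic form `vᵀ ∇²R(x) v` of the regularizer. -/
def hessRQuad {d : ℕ} (α : ℝ) (x v : Fin d → ℝ) : ℝ :=
  ∑ i, (if α ≤ |x i| then 12 * (|x i| - α) ^ 2 else 0) * (v i) ^ 2

/-- The distribution of the random observation pattern: each unordered pair is included
independently with probability `p`.  -/
def omegaMeasure (d : ℕ) (p : ℝ) (hp1 : p ≤ 1) : Measure (Fin d × Fin d → Bool) :=
  Measure.pi fun _ => (PMF.bernoulli (Real.toNNReal p) (Real.toNNReal_le_one.mpr hp1)).toMeasure

/-- there is an absolute constant `c` such that if `p ≥ c μ⁶ log^{1.5} d / d`,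
then with probability at least `1 − 1/d` over `Ω`, every incoherent `x`
(`‖x‖_∞ ≤ 2μ/√d`, `‖x‖₂ ≤ 1`) satisfying the (regularizer-free) second-order optimality
condition has `‖x‖₂² ≥ 1/4`. -/


lemma lintegral_pi_prod {K : Type*} [Fintype K] [DecidableEq K]
    (μ : K → Measure Bool) [∀ k, IsProbabilityMeasure (μ k)]
    (h : K → Bool → ℝ≥0∞) :
    ∫⁻ ω, ∏ k, h k (ω k) ∂Measure.pi μ = ∏ k, ∫⁻ b, h k b ∂μ k := by
  have hmeas : Measurable (fun ω : K → Bool => ∏ k, h k (ω k)) := .of_discrete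
  have key : ∀ s : Finset K, ∀ x : K → Bool,
      (∫⋯∫⁻_s, (fun ω => ∏ k, h k (ω k)) ∂μ) x
        = (∏ k ∈ s, ∫⁻ b, h k b ∂μ k) * ∏ k ∈ sᶜ, h k (x k) := by
    intro s
    induction s using Finset.induction with
    | empty => intro x; simp [MeasureTheory.lmarginal_empty]
    | @insert i s hi ih =>
      intro x
      rw [MeasureTheory.lmarginal_insert _ hmeas hi x]
      have hsc : sᶜ = insert i ((insert i s)ᶜ) := by
        ext k
        simp only [Finset.mem_compl, Finset.mem_inter, Finset.mem_union, Finset.mem_singleton,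
          Finset.mem_insert]
        by_cases hk : k = i
        · subst hk; simp [hi]
        · simp [hk]
      have hii : i ∉ (insert i s)ᶜ := by simp
      calc ∫⁻ b, (∫⋯∫⁻_s, (fun ω => ∏ k, h k (ω k)) ∂μ) (Function.update x i b) ∂μ i
          = ∫⁻ b, (∏ k ∈ s, ∫⁻ b', h k b' ∂μ k) *
              ∏ k ∈ sᶜ, h k (Function.update x i b k) ∂μ i := by
            simp_rw [ih]
        _ = ∫⁻ b, ((∏ k ∈ s, ∫⁻ b', h k b' ∂μ k) *
              ∏ k ∈ (insert i s)ᶜ, h k (x k)) * h i b ∂μ i := by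
            congr 1; ext b
            rw [hsc, Finset.prod_insert hii]
            have : ∀ k ∈ (insert i s)ᶜ, h k (Function.update x i b k) = h k (x k) := by
              intro k hk
              have : k ≠ i := by rintro rfl; exact hii hk
              rw [Function.update_of_ne this]
            rw [Finset.prod_congr rfl this, Function.update_self]
            ring
        _ = ((∏ k ∈ s, ∫⁻ b', h k b' ∂μ k) * ∏ k ∈ (insert i s)ᶜ, h k (x k)) *
              ∫⁻ b, h i b ∂μ i := by
            rw [lintegral_const_mul _ .of_discrete]
        _ = (∏ k ∈ insert i s, ∫⁻ b, h k b ∂μ k) * ∏ k ∈ (insert i s)ᶜ, h k (x k) := by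
            rw [Finset.prod_insert hi]; ring
  have : Nonempty (K → Bool) := ⟨fun _ => false⟩
  rw [MeasureTheory.lintegral_eq_lmarginal_univ (Classical.arbitrary _), key]
  simp

lemma lintegral_bernoulli {p : ℝ} (hp0 : 0 ≤ p) (hp1 : p ≤ 1) (g : Bool → ℝ≥0∞) :
    ∫⁻ b, g b ∂(PMF.bernoulli (Real.toNNReal p) (Real.toNNReal_le_one.mpr hp1)).toMeasure
      = (1 - ENNReal.ofReal p) * g false + ENNReal.ofReal p * g true := by
  simp only [ENNReal.ofReal]
  rw [lintegral_fintype]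
  simp only [Fintype.sum_bool]
  rw [PMF.toMeasure_apply_singleton _ _ (measurableSet_singleton _),
    PMF.toMeasure_apply_singleton _ _ (measurableSet_singleton _)]
  simp [PMF.bernoulli_apply, mul_comm, add_comm]



lemma exp_quad {x : ℝ} (hx : |x| ≤ 1) : Real.exp x ≤ 1 + x + (3/4) * x^2 := by
  have h := Real.exp_bound hx (n := 2) (by norm_num)
  have h2 : ∑ m ∈ Finset.range 2, x ^ m / m.factorial = 1 + x := by
    simp [Finset.sum_range_succ]
  rw [h2] at h
  have h3 : |x| ^ 2 = x ^ 2 := sq_abs x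
  have := (abs_sub_le_iff.1 h).1
  norm_num [h3] at this ⊢
  nlinarith [this]

lemma exp_sum_quad_bound {K : Type*} [Fintype K] (a : K → ℝ) (l M S : ℝ)
    (hl : 0 ≤ l) (ha0 : ∀ k, 0 ≤ a k) (haM : ∀ k, a k ≤ M) (hlM : l * M ≤ 1)
    (hS : ∑ k, a k = S) (e : K → ℝ) (he : ∀ k, e k = l * a k ∨ e k = -(l * a k)) :
    ∑ k, (Real.exp (e k) - 1) ≤ ∑ k, e k + (3/4) * l^2 * M * S := by
  have key : ∀ k, Real.exp (e k) - 1 ≤ e k + (3/4) * l^2 * M * (a k) := by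
    intro k
    have hla : 0 ≤ l * a k := mul_nonneg hl (ha0 k)
    have hla1 : l * a k ≤ 1 := le_trans (mul_le_mul_of_nonneg_left (haM k) hl) hlM
    have hab : |e k| ≤ 1 := by
      rcases he k with h | h <;> rw [h]
      · rw [abs_of_nonneg hla]; exact hla1
      · rw [abs_neg, abs_of_nonneg hla]; exact hla1
    have := exp_quad hab
    have he2 : (e k)^2 = (l * a k)^2 := by rcases he k with h | h <;> rw [h] <;> ring
    have h4 : (l * a k)^2 ≤ l^2 * M * a k := by
      have e1 : (l * a k)^2 = (l * l) * (a k * a k) := by ring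
      have e2 : l^2 * M * a k = (l * l) * (M * a k) := by ring
      rw [e1, e2]
      apply mul_le_mul_of_nonneg_left _ (mul_nonneg hl hl)
      exact mul_le_mul_of_nonneg_right (haM k) (ha0 k)
    nlinarith [this, he2 ▸ h4]
  calc ∑ k, (Real.exp (e k) - 1) ≤ ∑ k, (e k + (3/4) * l^2 * M * (a k)) :=
        Finset.sum_le_sum (fun k _ => key k)
    _ = ∑ k, e k + (3/4) * l^2 * M * S := by rw [Finset.sum_add_distrib, ← Finset.mul_sum, hS]



lemma fiber_sum {ι K : Type*} [Fintype ι] [Fintype K] [DecidableEq K]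
    (e : ι → K) (c : ι → ℝ) (F : K → ℝ) :
    ∑ k, (∑ i ∈ univ.filter (fun i => e i = k), c i) * F k = ∑ i, c i * F (e i) := by
  simp_rw [Finset.sum_mul]
  rw [← Finset.sum_fiberwise univ e (fun i => c i * F (e i))]
  apply Finset.sum_congr rfl
  intro k _
  apply Finset.sum_congr rfl
  intro i hi
  rw [(Finset.mem_filter.1 hi).2]

lemma fiber_bound {ι K : Type*} [Fintype ι] [Fintype K] [DecidableEq K]
    (e : ι → K) (c : ι → ℝ) (B : ℝ) (hB : ∀ i, c i ≤ B) (hB0 : 0 ≤ B) (n : ℕ)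
    (hcard : ∀ k, (univ.filter (fun i => e i = k)).card ≤ n) (k : K) :
    ∑ i ∈ univ.filter (fun i => e i = k), c i ≤ n * B := by
  calc ∑ i ∈ univ.filter (fun i => e i = k), c i
      ≤ ∑ _i ∈ univ.filter (fun i => e i = k), B := Finset.sum_le_sum (fun i _ => hB i)
    _ = (univ.filter (fun i => e i = k)).card * B := by rw [Finset.sum_const, nsmul_eq_mul]
    _ ≤ n * B := by
        apply mul_le_mul_of_nonneg_right _ hB0
        exact_mod_cast hcard k

lemma pair_inj {d : ℕ} (j : Fin d) :
    Function.Injective (fun i : Fin d => ((min i j, max i j) : Fin d × Fin d)) := by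
  intro a b h
  simp only [Prod.mk.injEq] at h
  obtain ⟨h1, h2⟩ := h
  rcases le_total a j with ha | ha <;> rcases le_total b j with hb | hb
  · rwa [min_eq_left ha, min_eq_left hb] at h1
  · rw [min_eq_left ha, min_eq_right hb] at h1
    rw [max_eq_right ha, max_eq_left hb] at h2
    rw [h1, ← h2]
  · rw [min_eq_right ha, min_eq_left hb] at h1
    rw [max_eq_left ha, max_eq_right hb] at h2
    rw [h2, ← h1]
  · rwa [max_eq_left ha, max_eq_left hb] at h2

lemma cardA {d : ℕ} (j : Fin d) (k : Fin d × Fin d) :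
    ((univ : Finset (Fin d)).filter
      (fun i => ((min i j, max i j) : Fin d × Fin d) = k)).card ≤ 1 := by
  apply Finset.card_le_one.2
  intro a ha b hb
  exact pair_inj j ((Finset.mem_filter.1 ha).2.trans (Finset.mem_filter.1 hb).2.symm)

lemma cardB {d : ℕ} (k : Fin d × Fin d) :
    ((univ : Finset (Fin d × Fin d)).filter
      (fun q => ((min q.1 q.2, max q.1 q.2) : Fin d × Fin d) = k)).card ≤ 2 := by
  have hsub : (univ : Finset (Fin d × Fin d)).filter
      (fun q => ((min q.1 q.2, max q.1 q.2) : Fin d × Fin d) = k)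
      ⊆ {(k.1, k.2), (k.2, k.1)} := by
    intro q hq
    have h := (Finset.mem_filter.1 hq).2
    rw [Prod.ext_iff] at h
    obtain ⟨h1, h2⟩ := h
    dsimp only at h1 h2
    simp only [Finset.mem_insert, Finset.mem_singleton, Prod.ext_iff]
    rcases le_total q.1 q.2 with hle | hle
    · left
      rw [min_eq_left hle] at h1
      rw [max_eq_right hle] at h2
      exact ⟨h1, h2⟩
    · right
      rw [min_eq_right hle] at h1
      rw [max_eq_left hle] at h2
      exact ⟨h2, h1⟩
  calc _ ≤ ({(k.1, k.2), (k.2, k.1)} : Finset (Fin d × Fin d)).card := Finset.card_le_card hsub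
    _ ≤ 2 := Finset.card_insert_le _ _ |>.trans (by simp)


/-- MGF bound. -/
lemma mgf_bound (hp0 : 0 < p) (hp1 : p ≤ 1) (a : Fin d × Fin d → ℝ) (l : ℝ) :
    ∫⁻ ω, ENNReal.ofReal (Real.exp (l * ∑ k, a k * (if ω k then (1:ℝ) else 0)))
        ∂omegaMeasure d p hp1
      ≤ ENNReal.ofReal (Real.exp (p * ∑ k, (Real.exp (l * a k) - 1))) := by
  have step1 : ∀ ω : Fin d × Fin d → Bool,
      ENNReal.ofReal (Real.exp (l * ∑ k, a k * (if ω k then (1:ℝ) else 0)))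
        = ∏ k, ENNReal.ofReal (Real.exp (l * (a k * (if ω k then (1:ℝ) else 0)))) := by
    intro ω
    rw [Finset.mul_sum, Real.exp_sum, ← ENNReal.ofReal_prod_of_nonneg]
    intro k _; positivity
  simp_rw [step1]
  unfold omegaMeasure
  rw [lintegral_pi_prod (fun _ => (PMF.bernoulli (Real.toNNReal p) (Real.toNNReal_le_one.mpr hp1)).toMeasure)
    (fun k b => ENNReal.ofReal (Real.exp (l * (a k * if b then (1:ℝ) else 0))))]
  have step2 : ∀ k, (∫⁻ b, ENNReal.ofReal (Real.exp (l * (a k * (if b then (1:ℝ) else 0))))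
      ∂(PMF.bernoulli (Real.toNNReal p) (Real.toNNReal_le_one.mpr hp1)).toMeasure)
      ≤ ENNReal.ofReal (Real.exp (p * (Real.exp (l * a k) - 1))) := by
    intro k
    rw [lintegral_bernoulli hp0.le hp1]
    norm_num
    have h1 : (1 : ℝ≥0∞) - ENNReal.ofReal p = ENNReal.ofReal (1 - p) := by
      rw [← ENNReal.ofReal_one, ← ENNReal.ofReal_sub _ hp0.le]
    rw [h1, ← ENNReal.ofReal_mul hp0.le, ← ENNReal.ofReal_add (by linarith) (by positivity)]
    apply ENNReal.ofReal_le_ofReal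
    have : (1 - p) + p * Real.exp (l * a k) = p * (Real.exp (l * a k) - 1) + 1 := by ring
    rw [this]
    exact Real.add_one_le_exp _
  calc ∏ k, _ ≤ ∏ k, ENNReal.ofReal (Real.exp (p * (Real.exp (l * a k) - 1))) :=
        Finset.prod_le_prod' (fun k _ => step2 k)
    _ = ENNReal.ofReal (Real.exp (p * ∑ k, (Real.exp (l * a k) - 1))) := by
        rw [← ENNReal.ofReal_prod_of_nonneg (fun k _ => (Real.exp_pos _).le), ← Real.exp_sum,
          Finset.mul_sum]

/-- Chernoff upper tail. -/
lemma chernoff_upper (hp0 : 0 < p) (hp1 : p ≤ 1) (a : Fin d × Fin d → ℝ) {l t : ℝ} (hl : 0 ≤ l) :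
    omegaMeasure d p hp1 {ω | t ≤ ∑ k, a k * (if ω k then (1:ℝ) else 0)}
      ≤ ENNReal.ofReal (Real.exp (p * (∑ k, (Real.exp (l * a k) - 1)) - l * t)) := by
  set X : (Fin d × Fin d → Bool) → ℝ := fun ω => ∑ k, a k * (if ω k then (1:ℝ) else 0) with hX
  have hsub : {ω | t ≤ X ω} ⊆
      {ω | ENNReal.ofReal (Real.exp (l * t)) ≤ ENNReal.ofReal (Real.exp (l * X ω))} := by
    intro ω hω
    exact ENNReal.ofReal_le_ofReal (Real.exp_le_exp.mpr (mul_le_mul_of_nonneg_left hω hl))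
  have markov := mul_meas_ge_le_lintegral₀
    (μ := omegaMeasure d p hp1)
    (f := fun ω => ENNReal.ofReal (Real.exp (l * X ω)))
    (Measurable.of_discrete).aemeasurable (ENNReal.ofReal (Real.exp (l * t)))
  have h2 : omegaMeasure d p hp1 {ω | t ≤ X ω}
      ≤ ENNReal.ofReal (Real.exp (p * ∑ k, (Real.exp (l * a k) - 1)))
        / ENNReal.ofReal (Real.exp (l * t)) := by
    rw [ENNReal.le_div_iff_mul_le (Or.inl (by simp [Real.exp_pos])) (Or.inl (by simp))]
    calc omegaMeasure d p hp1 {ω | t ≤ X ω} * ENNReal.ofReal (Real.exp (l * t))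
        = ENNReal.ofReal (Real.exp (l * t)) * omegaMeasure d p hp1 {ω | t ≤ X ω} := mul_comm _ _
      _ ≤ ENNReal.ofReal (Real.exp (l * t)) * omegaMeasure d p hp1
            {ω | ENNReal.ofReal (Real.exp (l * t)) ≤ ENNReal.ofReal (Real.exp (l * X ω))} :=
          mul_le_mul_right (measure_mono hsub) _
      _ ≤ ∫⁻ ω, ENNReal.ofReal (Real.exp (l * X ω)) ∂omegaMeasure d p hp1 := markov
      _ ≤ _ := mgf_bound hp0 hp1 a l
  refine h2.trans ?_
  rw [← ENNReal.ofReal_div_of_pos (Real.exp_pos _), ← Real.exp_sub]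

/-- Chernoff lower tail. -/
lemma chernoff_lower (hp0 : 0 < p) (hp1 : p ≤ 1) (a : Fin d × Fin d → ℝ) {l t : ℝ} (hl : 0 ≤ l) :
    omegaMeasure d p hp1 {ω | ∑ k, a k * (if ω k then (1:ℝ) else 0) ≤ t}
      ≤ ENNReal.ofReal (Real.exp (p * (∑ k, (Real.exp (-l * a k) - 1)) + l * t)) := by
  set X : (Fin d × Fin d → Bool) → ℝ := fun ω => ∑ k, a k * (if ω k then (1:ℝ) else 0) with hX
  have hsub : {ω | X ω ≤ t} ⊆
      {ω | ENNReal.ofReal (Real.exp (-l * t)) ≤ ENNReal.ofReal (Real.exp (-l * X ω))} := by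
    intro ω hω
    apply ENNReal.ofReal_le_ofReal
    apply Real.exp_le_exp.mpr
    have : -l * t ≤ -l * X ω := by
      have := mul_le_mul_of_nonneg_left hω hl
      linarith
    exact this
  have markov := mul_meas_ge_le_lintegral₀
    (μ := omegaMeasure d p hp1)
    (f := fun ω => ENNReal.ofReal (Real.exp (-l * X ω)))
    (Measurable.of_discrete).aemeasurable (ENNReal.ofReal (Real.exp (-l * t)))
  have h2 : omegaMeasure d p hp1 {ω | X ω ≤ t}
      ≤ ENNReal.ofReal (Real.exp (p * ∑ k, (Real.exp (-l * a k) - 1)))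
        / ENNReal.ofReal (Real.exp (-l * t)) := by
    rw [ENNReal.le_div_iff_mul_le (Or.inl (by simp [Real.exp_pos])) (Or.inl (by simp))]
    calc omegaMeasure d p hp1 {ω | X ω ≤ t} * ENNReal.ofReal (Real.exp (-l * t))
        = ENNReal.ofReal (Real.exp (-l * t)) * omegaMeasure d p hp1 {ω | X ω ≤ t} := mul_comm _ _
      _ ≤ ENNReal.ofReal (Real.exp (-l * t)) * omegaMeasure d p hp1
            {ω | ENNReal.ofReal (Real.exp (-l * t)) ≤ ENNReal.ofReal (Real.exp (-l * X ω))} :=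
          mul_le_mul_right (measure_mono hsub) _
      _ ≤ ∫⁻ ω, ENNReal.ofReal (Real.exp (-l * X ω)) ∂omegaMeasure d p hp1 := markov
      _ ≤ _ := mgf_bound hp0 hp1 a (-l)
  refine h2.trans ?_
  rw [← ENNReal.ofReal_div_of_pos (Real.exp_pos _), ← Real.exp_sub,
    show (-l*t) = -(l*t) by ring, sub_neg_eq_add]


section Tails

variable {d : ℕ} {p μ : ℝ} {z : Fin d → ℝ}

/-- Upper tail for the row sums. -/
lemma tailA (hd : 0 < d) (hp0 : 0 < p) (hp1 : p ≤ 1) (hμ : 0 < μ)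
    (hz2 : ∀ i, z i ^ 2 ≤ μ ^ 2 / d) (hzn : ∑ i, z i ^ 2 = 1) (j : Fin d) :
    omegaMeasure d p hp1
      {ω | 11/10 * p ≤ ∑ i, z i ^ 2 * (if ω (min i j, max i j) then (1:ℝ) else 0)}
      ≤ ENNReal.ofReal (Real.exp (-(p * d / (300 * μ ^ 2)))) := by
  classical
  set e : Fin d → Fin d × Fin d := fun i => (min i j, max i j) with he
  set a : Fin d × Fin d → ℝ := fun k => ∑ i ∈ univ.filter (fun i => e i = k), z i ^ 2 with ha
  set M : ℝ := μ ^ 2 / d with hM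
  set l : ℝ := d / (15 * μ ^ 2) with hl
  have hM0 : 0 < M := by
    rw [hM]; positivity
  have hl0 : 0 < l := by rw [hl]; positivity
  have hlM : l * M = 1/15 := by
    rw [hl, hM]; field_simp
  have hsetEq : {ω : Fin d × Fin d → Bool |
      11/10 * p ≤ ∑ i, z i ^ 2 * (if ω (min i j, max i j) then (1:ℝ) else 0)}
      = {ω | 11/10 * p ≤ ∑ k, a k * (if ω k then (1:ℝ) else 0)} := by
    ext ω
    simp only [Set.mem_setOf_eq, ha]
    rw [fiber_sum e (fun i => z i ^ 2) (fun k => if ω k then (1:ℝ) else 0)]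
  rw [hsetEq]
  refine (chernoff_upper hp0 hp1 a hl0.le).trans ?_
  apply ENNReal.ofReal_le_ofReal
  apply Real.exp_le_exp.mpr
  have ha0 : ∀ k, 0 ≤ a k := fun k => Finset.sum_nonneg (fun i _ => sq_nonneg _)
  have haM : ∀ k, a k ≤ M := by
    intro k
    have := fiber_bound e (fun i => z i ^ 2) M (fun i => hz2 i) hM0.le 1 (fun k => cardA j k) k
    simpa using this
  have hSa : ∑ k, a k = 1 := by
    have := fiber_sum e (fun i => z i ^ 2) (fun _ => (1:ℝ))
    simpa [hzn] using this
  have hbound := exp_sum_quad_bound a l M 1 hl0.le ha0 haM (by rw [hlM]; norm_num) hSa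
    (fun k => l * a k) (fun k => Or.inl rfl)
  have hsum_e : ∑ k, l * a k = l := by rw [← Finset.mul_sum, hSa, mul_one]
  have h1 : ∑ k, (Real.exp (l * a k) - 1) ≤ l + (3/4) * l^2 * M := by
    calc ∑ k, (Real.exp (l * a k) - 1) ≤ ∑ k, l * a k + (3/4) * l^2 * M * 1 := hbound
      _ = l + (3/4) * l^2 * M := by rw [hsum_e]; ring
  have h2 : (3/4) * l^2 * M = l / 20 := by
    linear_combination (3/4 : ℝ) * l * hlM
  calc p * (∑ k, (Real.exp (l * a k) - 1)) - l * (11/10 * p)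
      ≤ p * (l + l/20) - l * (11/10 * p) := by
        have := h1
        rw [h2] at this
        nlinarith [hp0.le]
    _ = -(l * p / 20) := by ring
    _ = -(p * d / (300 * μ ^ 2)) := by rw [hl]; field_simp; ring

/-- Lower tail for the full quadratic form. -/
lemma tailB (hd : 0 < d) (hp0 : 0 < p) (hp1 : p ≤ 1) (hμ : 0 < μ)
    (hz2 : ∀ i, z i ^ 2 ≤ μ ^ 2 / d) (hzn : ∑ i, z i ^ 2 = 1) :
    omegaMeasure d p hp1
      {ω | ∑ i, ∑ j, (z i ^ 2 * z j ^ 2) *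
          (if ω (min i j, max i j) then (1:ℝ) else 0) ≤ 9/10 * p}
      ≤ ENNReal.ofReal (Real.exp (-(p * d ^ 2 / (600 * μ ^ 4)))) := by
  classical
  set e : Fin d × Fin d → Fin d × Fin d := fun q => (min q.1 q.2, max q.1 q.2) with he
  set a : Fin d × Fin d → ℝ :=
    fun k => ∑ q ∈ univ.filter (fun q => e q = k), z q.1 ^ 2 * z q.2 ^ 2 with ha
  set M : ℝ := 2 * μ ^ 4 / d ^ 2 with hM
  set l : ℝ := d ^ 2 / (30 * μ ^ 4) with hl
  have hM0 : 0 < M := by rw [hM]; positivity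
  have hl0 : 0 < l := by rw [hl]; positivity
  have hlM : l * M = 1/15 := by rw [hl, hM]; field_simp; ring
  have hsetEq : {ω : Fin d × Fin d → Bool | ∑ i, ∑ j, (z i ^ 2 * z j ^ 2) *
        (if ω (min i j, max i j) then (1:ℝ) else 0) ≤ 9/10 * p}
      = {ω | ∑ k, a k * (if ω k then (1:ℝ) else 0) ≤ 9/10 * p} := by
    ext ω
    simp only [Set.mem_setOf_eq, ha]
    rw [fiber_sum e (fun q => z q.1 ^ 2 * z q.2 ^ 2) (fun k => if ω k then (1:ℝ) else 0)]
    have hq : ∑ q : Fin d × Fin d, z q.1 ^ 2 * z q.2 ^ 2 * (if ω (e q) then (1:ℝ) else 0)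
        = ∑ i, ∑ j, (z i ^ 2 * z j ^ 2) * (if ω (min i j, max i j) then (1:ℝ) else 0) := by
      rw [Fintype.sum_prod_type]
    rw [hq]
  rw [hsetEq]
  refine (chernoff_lower hp0 hp1 a hl0.le).trans ?_
  apply ENNReal.ofReal_le_ofReal
  apply Real.exp_le_exp.mpr
  have ha0 : ∀ k, 0 ≤ a k := fun k =>
    Finset.sum_nonneg (fun q _ => mul_nonneg (sq_nonneg _) (sq_nonneg _))
  have haM : ∀ k, a k ≤ M := by
    intro k
    have hterm : ∀ q : Fin d × Fin d, z q.1 ^ 2 * z q.2 ^ 2 ≤ μ ^ 4 / d ^ 2 := by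
      intro q
      have h1 := hz2 q.1
      have h2 := hz2 q.2
      have : μ ^ 4 / d ^ 2 = (μ ^ 2 / d) * (μ ^ 2 / d) := by ring
      rw [this]
      exact mul_le_mul h1 h2 (sq_nonneg _) (by positivity)
    have := fiber_bound e (fun q => z q.1 ^ 2 * z q.2 ^ 2) (μ ^ 4 / d ^ 2) hterm
      (by positivity) 2 (fun k => cardB k) k
    calc a k ≤ 2 * (μ ^ 4 / d ^ 2) := by simpa using this
      _ = M := by rw [hM]; ring
  have hSa : ∑ k, a k = 1 := by
    have h := fiber_sum e (fun q => z q.1 ^ 2 * z q.2 ^ 2) (fun _ => (1:ℝ))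
    have h2 : ∑ q : Fin d × Fin d, z q.1 ^ 2 * z q.2 ^ 2 = 1 := by
      rw [Fintype.sum_prod_type]
      have : ∑ x : Fin d, ∑ y : Fin d, z x ^ 2 * z y ^ 2
          = (∑ x : Fin d, z x ^ 2) * (∑ y : Fin d, z y ^ 2) := by
        rw [Finset.sum_mul_sum]
      rw [this, hzn]; norm_num
    simpa [h2] using h
  have hbound := exp_sum_quad_bound a l M 1 hl0.le ha0 haM (by rw [hlM]; norm_num) hSa
    (fun k => -l * a k) (fun k => Or.inr (by ring))
  have hsum_e : ∑ k, -l * a k = -l := by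
    rw [← Finset.mul_sum, hSa, mul_one]
  have h1 : ∑ k, (Real.exp (-l * a k) - 1) ≤ -l + (3/4) * l^2 * M := by
    calc ∑ k, (Real.exp (-l * a k) - 1) ≤ ∑ k, -l * a k + (3/4) * l^2 * M * 1 := hbound
      _ = -l + (3/4) * l^2 * M := by rw [hsum_e]; ring
  have h2 : (3/4) * l^2 * M = l / 20 := by
    linear_combination (3/4 : ℝ) * l * hlM
  calc p * (∑ k, (Real.exp (-l * a k) - 1)) + l * (9/10 * p)
      ≤ p * (-l + l/20) + l * (9/10 * p) := by
        have := h1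
        rw [h2] at this
        nlinarith [hp0.le]
    _ = -(l * p / 20) := by ring
    _ = -(p * d ^ 2 / (600 * μ ^ 4)) := by rw [hl]; field_simp; ring

end Tails


/-- The deterministic part: on the good event, second-order points have norm ≥ 1/2. -/
lemma deterministic {d : ℕ} (ω : Fin d × Fin d → Bool) (p μ : ℝ) (z x : Fin d → ℝ)
    (hp0 : 0 < p)
    (hzn : ∑ i, z i ^ 2 = 1)
    (hGA : ∀ j, ∑ i, z i ^ 2 * (if ω (min i j, max i j) then (1:ℝ) else 0) ≤ 11/10 * p)
    (hGB : 9/10 * p ≤ ∑ i, ∑ j, (z i ^ 2 * z j ^ 2) *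
        (if ω (min i j, max i j) then (1:ℝ) else 0))
    (hsoc : ∀ v : Fin d → ℝ,
        frobNorm (projO ω (outer v x + outer x v)) ^ 2 ≥
          2 * (v ⬝ᵥ (projO ω (outer z z - outer x x)).mulVec v)) :
    vnorm x ^ 2 ≥ 1 / 4 := by
  classical
  set w : Fin d → Fin d → ℝ := fun i j => if ω (min i j, max i j) then (1:ℝ) else 0 with hw
  have hw0 : ∀ i j, 0 ≤ w i j := by intro i j; rw [hw]; dsimp only; split <;> norm_num
  have hwsymm : ∀ i j, w i j = w j i := by
    intro i j; rw [hw]; dsimp only; rw [min_comm, max_comm]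
  set s : ℝ := ∑ i, x i ^ 2 with hs
  have hs0 : 0 ≤ s := Finset.sum_nonneg fun i _ => sq_nonneg _
  have hvn : vnorm x ^ 2 = s := Real.sq_sqrt hs0
  rw [hvn]
  -- extract the SOC inequality at v = z in sum form
  have hLHS : frobNorm (projO ω (outer z x + outer x z)) ^ 2
      = ∑ i, ∑ j, w i j * (z i * x j + x i * z j) ^ 2 := by
    rw [frobNorm, Real.sq_sqrt]
    · apply Finset.sum_congr rfl; intro i _
      apply Finset.sum_congr rfl; intro j _
      rw [hw]; dsimp only [projO, outer, Matrix.add_apply]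
      split <;> ring
    · apply Finset.sum_nonneg; intro i _
      apply Finset.sum_nonneg; intro j _
      exact sq_nonneg _
  have hRHS : z ⬝ᵥ (projO ω (outer z z - outer x x)).mulVec z
      = ∑ i, ∑ j, (w i j * (z i ^ 2 * z j ^ 2) - w i j * ((z i * x i) * (z j * x j))) := by
    rw [dotProduct, hw]
    apply Finset.sum_congr rfl; intro i _
    rw [Matrix.mulVec, dotProduct]
    dsimp only [projO, outer, Matrix.sub_apply]
    rw [Finset.mul_sum]
    apply Finset.sum_congr rfl; intro j _
    split <;> ring
  have hsoc_z := hsoc z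
  rw [hLHS, hRHS] at hsoc_z
  -- key sum A := ∑∑ w z_i² x_j² is at most (11/10) p s
  have hA : ∑ i, ∑ j, w i j * (z i ^ 2 * x j ^ 2) ≤ 11/10 * p * s := by
    rw [Finset.sum_comm]
    calc ∑ j, ∑ i, w i j * (z i ^ 2 * x j ^ 2)
        = ∑ j, x j ^ 2 * ∑ i, z i ^ 2 * w i j := by
          apply Finset.sum_congr rfl; intro j _
          rw [Finset.mul_sum]
          apply Finset.sum_congr rfl; intro i _; ring
      _ ≤ ∑ j, x j ^ 2 * (11/10 * p) := by
          apply Finset.sum_le_sum; intro j _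
          apply mul_le_mul_of_nonneg_left _ (sq_nonneg _)
          have := hGA j
          calc ∑ i, z i ^ 2 * w i j = ∑ i, z i ^ 2 * (if ω (min i j, max i j) then (1:ℝ) else 0) := rfl
            _ ≤ 11/10 * p := this
      _ = 11/10 * p * s := by rw [← Finset.sum_mul, hs]; ring
  -- the swapped sum equals A
  have hA' : ∑ i, ∑ j, w i j * (x i ^ 2 * z j ^ 2) = ∑ i, ∑ j, w i j * (z i ^ 2 * x j ^ 2) := by
    rw [Finset.sum_comm]
    apply Finset.sum_congr rfl; intro i _
    apply Finset.sum_congr rfl; intro j _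
    rw [hwsymm j i]; ring
  -- LHS bound
  have h1 : ∑ i, ∑ j, w i j * (z i * x j + x i * z j) ^ 2 ≤ 4 * (11/10 * p * s) := by
    have : ∑ i, ∑ j, w i j * (z i * x j + x i * z j) ^ 2
        ≤ ∑ i, ∑ j, (2 * (w i j * (z i ^ 2 * x j ^ 2)) + 2 * (w i j * (x i ^ 2 * z j ^ 2))) := by
      apply Finset.sum_le_sum; intro i _
      apply Finset.sum_le_sum; intro j _
      have hsq : (z i * x j + x i * z j) ^ 2 ≤ 2 * (z i ^ 2 * x j ^ 2) + 2 * (x i ^ 2 * z j ^ 2) := by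
        nlinarith [sq_nonneg (z i * x j - x i * z j)]
      nlinarith [hw0 i j, hsq]
    refine this.trans ?_
    have hsplit : ∑ i, ∑ j, (2 * (w i j * (z i ^ 2 * x j ^ 2)) + 2 * (w i j * (x i ^ 2 * z j ^ 2)))
        = 2 * (∑ i, ∑ j, w i j * (z i ^ 2 * x j ^ 2)) + 2 * (∑ i, ∑ j, w i j * (x i ^ 2 * z j ^ 2)) := by
      simp_rw [Finset.sum_add_distrib, ← Finset.mul_sum]
    rw [hsplit, hA']
    linarith [hA]
  -- T bound (upper)
  have hT : ∑ i, ∑ j, w i j * ((z i * x i) * (z j * x j)) ≤ 11/10 * p * s := by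
    have : ∑ i, ∑ j, w i j * ((z i * x i) * (z j * x j))
        ≤ ∑ i, ∑ j, ((1/2) * (w i j * (z i ^ 2 * x j ^ 2)) + (1/2) * (w i j * (x i ^ 2 * z j ^ 2))) := by
      apply Finset.sum_le_sum; intro i _
      apply Finset.sum_le_sum; intro j _
      have hsq : (z i * x i) * (z j * x j)
          ≤ (1/2) * (z i ^ 2 * x j ^ 2) + (1/2) * (x i ^ 2 * z j ^ 2) := by
        nlinarith [sq_nonneg (z i * x j - x i * z j)]
      nlinarith [hw0 i j, hsq]
    refine le_trans this ?_
    have hsplit : ∑ i, ∑ j, ((1/2) * (w i j * (z i ^ 2 * x j ^ 2)) + (1/2) * (w i j * (x i ^ 2 * z j ^ 2)))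
        = (1/2) * (∑ i, ∑ j, w i j * (z i ^ 2 * x j ^ 2)) + (1/2) * (∑ i, ∑ j, w i j * (x i ^ 2 * z j ^ 2)) := by
      simp_rw [Finset.sum_add_distrib, ← Finset.mul_sum]
    rw [hsplit, hA']
    linarith [hA]
  -- B bound
  have hB : 9/10 * p ≤ ∑ i, ∑ j, w i j * (z i ^ 2 * z j ^ 2) := by
    refine hGB.trans (le_of_eq ?_)
    apply Finset.sum_congr rfl; intro i _
    apply Finset.sum_congr rfl; intro j _
    rw [hw]; dsimp only; split <;> ring
  -- split RHS
  have hRHSsplit : ∑ i, ∑ j, (w i j * (z i ^ 2 * z j ^ 2) - w i j * ((z i * x i) * (z j * x j)))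
      = (∑ i, ∑ j, w i j * (z i ^ 2 * z j ^ 2)) - ∑ i, ∑ j, w i j * ((z i * x i) * (z j * x j)) := by
    rw [← Finset.sum_sub_distrib]
    simp_rw [← Finset.sum_sub_distrib]
  rw [hRHSsplit] at hsoc_z
  -- conclude
  have hfinal : 2 * (9/10 * p) - 2 * (11/10 * p * s) ≤ 4 * (11/10 * p * s) := by
    calc 2 * (9/10 * p) - 2 * (11/10 * p * s)
        ≤ 2 * ((∑ i, ∑ j, w i j * (z i ^ 2 * z j ^ 2))
            - ∑ i, ∑ j, w i j * ((z i * x i) * (z j * x j))) := by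
          have := hB
          have := hT
          linarith
      _ ≤ ∑ i, ∑ j, w i j * (z i * x j + x i * z j) ^ 2 := hsoc_z
      _ ≤ 4 * (11/10 * p * s) := h1
  have hps : p * (18/10) ≤ p * (66/10 * s) := by linarith
  have hs' : 18/10 ≤ 66/10 * s := (mul_le_mul_iff_right₀ hp0).mp hps
  linarith



lemma sqrt_log_ge {d : ℕ} (hd : 2 ≤ d) : (4/5 : ℝ) ≤ Real.sqrt (Real.log d) := by
  have hlog2 : (16/25 : ℝ) ≤ Real.log 2 := by
    have := Real.log_two_gt_d9
    linarith
  have hmono : Real.log 2 ≤ Real.log d := by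
    apply Real.log_le_log (by norm_num)
    exact_mod_cast hd
  have h45 : (4/5 : ℝ) = Real.sqrt (16/25) := by
    rw [show (16/25 : ℝ) = (4/5)^2 by norm_num, Real.sqrt_sq (by norm_num)]
  rw [h45]
  exact Real.sqrt_le_sqrt (by linarith)

lemma rpow_log_ge {d : ℕ} (hd : 2 ≤ d) :
    (4/5 : ℝ) * Real.log d ≤ Real.log d ^ ((3:ℝ)/2) := by
  have hL0 : 0 < Real.log d := by
    apply Real.log_pos
    exact_mod_cast (by omega : (1:ℕ) < d)
  have : Real.log d ^ ((3:ℝ)/2) = Real.log d * Real.sqrt (Real.log d) := by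
    rw [show ((3:ℝ)/2) = 1 + 1/2 by norm_num, Real.rpow_add hL0, Real.rpow_one,
      ← Real.sqrt_eq_rpow]
  rw [this]
  calc (4/5 : ℝ) * Real.log d = Real.log d * (4/5) := by ring
    _ ≤ Real.log d * Real.sqrt (Real.log d) :=
        mul_le_mul_of_nonneg_left (sqrt_log_ge hd) hL0.le

lemma numericA {d : ℕ} {p μ : ℝ} (hd : 2 ≤ d) (hμ1 : 1 ≤ μ)
    (hplb : 100000 * μ ^ 6 * Real.log d ^ ((3:ℝ)/2) / d ≤ p) :
    Real.exp (-(p * d / (300 * μ ^ 2))) ≤ 1 / (2 * (d:ℝ)^2) := by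
  have hd0 : (0:ℝ) < d := by positivity
  have hL0 : 0 < Real.log d := Real.log_pos (by exact_mod_cast (by omega : (1:ℕ) < d))
  have hL2 : Real.log 2 ≤ Real.log d := Real.log_le_log (by norm_num) (by exact_mod_cast hd)
  have hlog2pos : (0:ℝ) < Real.log 2 := Real.log_pos (by norm_num)
  have key1 : 100000 * μ ^ 6 * Real.log d ^ ((3:ℝ)/2) ≤ p * d := by
    rw [div_le_iff₀ hd0] at hplb
    linarith
  have hμ2 : 1 ≤ μ ^ 2 := by nlinarith
  have hμ6 : μ ^ 2 ≤ μ ^ 6 := pow_le_pow_right₀ (by linarith) (by norm_num)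
  have hrp := rpow_log_ge hd
  set L := Real.log d with hL
  -- show log (2 d^2) ≤ p d / (300 μ²), then exponentiate
  have hlogform : Real.log (2 * (d:ℝ)^2) = Real.log 2 + 2 * L := by
    rw [Real.log_mul (by norm_num) (by positivity), Real.log_pow]
    push_cast; ring
  have hstep : Real.log (2 * (d:ℝ)^2) ≤ p * d / (300 * μ ^ 2) := by
    rw [le_div_iff₀ (by positivity), hlogform]
    have h1 : (Real.log 2 + 2 * L) * (300 * μ ^ 2) ≤ 3 * L * (300 * μ ^ 2) := by
      apply mul_le_mul_of_nonneg_right _ (by positivity)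
      linarith
    have h2 : 3 * L * (300 * μ ^ 2) = 900 * (μ ^ 2 * L) := by ring
    have h3 : 900 * (μ ^ 2 * L) ≤ 80000 * (μ ^ 6 * L) := by
      have h6 : μ ^ 2 * L ≤ μ ^ 6 * L := mul_le_mul_of_nonneg_right hμ6 hL0.le
      have hb : (0:ℝ) ≤ μ ^ 6 * L := by positivity
      linarith
    have h4 : 80000 * (μ ^ 6 * L) ≤ 100000 * μ ^ 6 * ((4/5) * L) := by ring_nf; linarith
    have h5 : 100000 * μ ^ 6 * ((4/5) * L) ≤ 100000 * μ ^ 6 * (L ^ ((3:ℝ)/2)) :=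
      mul_le_mul_of_nonneg_left hrp (by positivity)
    calc (Real.log 2 + 2 * L) * (300 * μ ^ 2) ≤ 3 * L * (300 * μ ^ 2) := h1
      _ = 900 * (μ ^ 2 * L) := h2
      _ ≤ 80000 * (μ ^ 6 * L) := h3
      _ ≤ 100000 * μ ^ 6 * ((4/5) * L) := h4
      _ ≤ 100000 * μ ^ 6 * (L ^ ((3:ℝ)/2)) := h5
      _ ≤ p * d := key1
  calc Real.exp (-(p * d / (300 * μ ^ 2)))
      ≤ Real.exp (-(Real.log (2 * (d:ℝ)^2))) := by
        apply Real.exp_le_exp.mpr; linarith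
    _ = 1 / (2 * (d:ℝ)^2) := by
        rw [Real.exp_neg, Real.exp_log (by positivity), one_div]

lemma numericB {d : ℕ} {p μ : ℝ} (hd : 2 ≤ d) (hμ1 : 1 ≤ μ)
    (hplb : 100000 * μ ^ 6 * Real.log d ^ ((3:ℝ)/2) / d ≤ p) :
    Real.exp (-(p * (d:ℝ) ^ 2 / (600 * μ ^ 4))) ≤ 1 / (2 * (d:ℝ)) := by
  have hd0 : (0:ℝ) < d := by positivity
  have hd2 : (2:ℝ) ≤ d := by exact_mod_cast hd
  have hL0 : 0 < Real.log d := Real.log_pos (by exact_mod_cast (by omega : (1:ℕ) < d))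
  have hL2 : Real.log 2 ≤ Real.log d := Real.log_le_log (by norm_num) (by exact_mod_cast hd)
  have key1 : 100000 * μ ^ 6 * Real.log d ^ ((3:ℝ)/2) ≤ p * d := by
    rw [div_le_iff₀ hd0] at hplb
    linarith
  have hμ2 : 1 ≤ μ ^ 2 := by nlinarith
  have hμ4 : 1 ≤ μ ^ 4 := by nlinarith
  have hμ46 : μ ^ 4 ≤ μ ^ 6 := pow_le_pow_right₀ (by linarith) (by norm_num)
  have hrp := rpow_log_ge hd
  set L := Real.log d with hL
  have hlogform : Real.log (2 * (d:ℝ)) = Real.log 2 + L := by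
    rw [Real.log_mul (by norm_num) (by positivity)]
  have hp0' : 0 < p := by
    have : (0:ℝ) < 100000 * μ ^ 6 * L ^ ((3:ℝ)/2) / d := by
      apply div_pos _ hd0
      apply mul_pos (by positivity)
      exact Real.rpow_pos_of_pos hL0 _
    linarith
  have hstep : Real.log (2 * (d:ℝ)) ≤ p * (d:ℝ)^2 / (600 * μ ^ 4) := by
    rw [le_div_iff₀ (by positivity), hlogform]
    have hpd2 : p * d * 2 ≤ p * (d:ℝ)^2 := by nlinarith [mul_nonneg (mul_nonneg hp0'.le (sub_nonneg.mpr hd2)) hd0.le]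
    have h1 : (Real.log 2 + L) * (600 * μ ^ 4) ≤ 2 * L * (600 * μ ^ 4) := by
      apply mul_le_mul_of_nonneg_right _ (by positivity)
      linarith
    have h3 : 1200 * (μ ^ 4 * L) ≤ 80000 * (μ ^ 6 * L) * 2 := by
      have h6 : μ ^ 4 * L ≤ μ ^ 6 * L := mul_le_mul_of_nonneg_right hμ46 hL0.le
      have hb : (0:ℝ) ≤ μ ^ 6 * L := by positivity
      linarith
    have h5 : 100000 * μ ^ 6 * ((4/5) * L) ≤ 100000 * μ ^ 6 * (L ^ ((3:ℝ)/2)) :=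
      mul_le_mul_of_nonneg_left hrp (by positivity)
    calc (Real.log 2 + L) * (600 * μ ^ 4) ≤ 2 * L * (600 * μ ^ 4) := h1
      _ = 1200 * (μ ^ 4 * L) := by ring
      _ ≤ 80000 * (μ ^ 6 * L) * 2 := h3
      _ = (100000 * μ ^ 6 * ((4/5) * L)) * 2 := by ring
      _ ≤ (100000 * μ ^ 6 * (L ^ ((3:ℝ)/2))) * 2 := by linarith [h5]
      _ ≤ p * d * 2 := by linarith [key1]
      _ ≤ p * (d:ℝ)^2 := hpd2
  calc Real.exp (-(p * (d:ℝ)^2 / (600 * μ ^ 4)))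
      ≤ Real.exp (-(Real.log (2 * (d:ℝ)))) := by
        apply Real.exp_le_exp.mpr; linarith
    _ = 1 / (2 * (d:ℝ)) := by
        rw [Real.exp_neg, Real.exp_log (by positivity), one_div]


theorem stmt5 :
    ∃ c : ℝ, 0 < c ∧
      ∀ (d : ℕ), 0 < d →
      ∀ (μ p : ℝ) (z : Fin d → ℝ),
        0 < μ → 0 < p → ∀ (hp1 : p ≤ 1),
        vnorm z = 1 → (∀ i, |z i| ≤ μ / Real.sqrt d) →
        c * μ ^ 6 * Real.log d ^ ((3 : ℝ) / 2) / d ≤ p →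
        1 - 1 / (d : ENNReal) ≤
          omegaMeasure d p hp1
            {ω | ∀ x : Fin d → ℝ,
              (∀ i, |x i| ≤ 2 * μ / Real.sqrt d) → vnorm x ≤ 1 →
              (∀ v : Fin d → ℝ,
                frobNorm (projO ω (outer v x + outer x v)) ^ 2 ≥
                  2 * (v ⬝ᵥ (projO ω (outer z z - outer x x)).mulVec v)) →
              vnorm x ^ 2 ≥ 1 / 4} := by
  classical
  refine ⟨100000, by norm_num, ?_⟩
  intro d hd μ p z hμ hp hp1 hvz hzinc hplb
  have hd0 : (0:ℝ) < d := by exact_mod_cast hd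
  have hzn : ∑ i, z i ^ 2 = 1 := by
    have h0 : (0:ℝ) ≤ ∑ i, z i ^ 2 := Finset.sum_nonneg fun i _ => sq_nonneg _
    have h1 := Real.sq_sqrt h0
    rw [vnorm] at hvz
    rw [hvz] at h1
    linarith
  have hz2 : ∀ i, z i ^ 2 ≤ μ ^ 2 / d := by
    intro i
    have h := hzinc i
    have : z i ^ 2 = |z i| ^ 2 := (sq_abs _).symm
    rw [this]
    calc |z i| ^ 2 ≤ (μ / Real.sqrt d) ^ 2 := pow_le_pow_left₀ (abs_nonneg _) h 2
      _ = μ ^ 2 / d := by rw [div_pow, Real.sq_sqrt hd0.le]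
  rcases eq_or_lt_of_le (show 1 ≤ d from hd) with h1 | h2
  · have hz : (1:ℝ≥0∞) - 1 / (d : ℝ≥0∞) = 0 := by
      rw [← h1]
      simp
    rw [hz]
    exact zero_le
  · have hd2 : 2 ≤ d := h2
    have hμ1 : 1 ≤ μ := by
      have hsum : (1:ℝ) ≤ μ ^ 2 := by
        calc (1:ℝ) = ∑ i, z i ^ 2 := hzn.symm
          _ ≤ ∑ _i : Fin d, μ ^ 2 / d := Finset.sum_le_sum fun i _ => hz2 i
          _ = d * (μ ^ 2 / d) := by
              rw [Finset.sum_const, Finset.card_univ, Fintype.card_fin, nsmul_eq_mul]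
          _ = μ ^ 2 := by field_simp
      nlinarith
    set ν := omegaMeasure d p hp1 with hν
    set GA := {ω : Fin d × Fin d → Bool |
      ∀ j, ∑ i, z i ^ 2 * (if ω (min i j, max i j) then (1:ℝ) else 0) ≤ 11/10 * p} with hGA
    set GB := {ω : Fin d × Fin d → Bool |
      9/10 * p ≤ ∑ i, ∑ j, (z i ^ 2 * z j ^ 2) *
        (if ω (min i j, max i j) then (1:ℝ) else 0)} with hGB
    have hsub : GA ∩ GB ⊆ {ω | ∀ x : Fin d → ℝ,
        (∀ i, |x i| ≤ 2 * μ / Real.sqrt d) → vnorm x ≤ 1 →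
        (∀ v : Fin d → ℝ,
          frobNorm (projO ω (outer v x + outer x v)) ^ 2 ≥
            2 * (v ⬝ᵥ (projO ω (outer z z - outer x x)).mulVec v)) →
        vnorm x ^ 2 ≥ 1 / 4} := by
      rintro ω ⟨hga, hgb⟩ x _hxinc _hxn hsocx
      exact deterministic ω p μ z x hp hzn hga hgb hsocx
    have hGAc : ν GAᶜ ≤ (d : ℝ≥0∞) * ENNReal.ofReal (Real.exp (-(p * d / (300 * μ ^ 2)))) := by
      have hcsub : GAᶜ ⊆ ⋃ j : Fin d, {ω : Fin d × Fin d → Bool |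
          11/10 * p ≤ ∑ i, z i ^ 2 * (if ω (min i j, max i j) then (1:ℝ) else 0)} := by
        intro ω hω
        rw [Set.mem_compl_iff, hGA, Set.mem_setOf_eq, not_forall] at hω
        obtain ⟨j, hj⟩ := hω
        exact Set.mem_iUnion.2 ⟨j, (not_le.mp hj).le⟩
      calc ν GAᶜ ≤ ν (⋃ j : Fin d, {ω : Fin d × Fin d → Bool |
            11/10 * p ≤ ∑ i, z i ^ 2 * (if ω (min i j, max i j) then (1:ℝ) else 0)}) :=
            measure_mono hcsub
        _ ≤ ∑' j : Fin d, ν {ω : Fin d × Fin d → Bool |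
            11/10 * p ≤ ∑ i, z i ^ 2 * (if ω (min i j, max i j) then (1:ℝ) else 0)} :=
            measure_iUnion_le _
        _ = ∑ j : Fin d, ν {ω : Fin d × Fin d → Bool |
            11/10 * p ≤ ∑ i, z i ^ 2 * (if ω (min i j, max i j) then (1:ℝ) else 0)} :=
            tsum_fintype _
        _ ≤ ∑ _j : Fin d, ENNReal.ofReal (Real.exp (-(p * d / (300 * μ ^ 2)))) :=
            Finset.sum_le_sum fun j _ => tailA hd hp hp1 hμ hz2 hzn j
        _ = (d : ℝ≥0∞) * ENNReal.ofReal (Real.exp (-(p * d / (300 * μ ^ 2)))) := by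
            rw [Finset.sum_const, Finset.card_univ, Fintype.card_fin, nsmul_eq_mul]
    have hGBc : ν GBᶜ ≤ ENNReal.ofReal (Real.exp (-(p * (d:ℝ) ^ 2 / (600 * μ ^ 4)))) := by
      have hcsub : GBᶜ ⊆ {ω : Fin d × Fin d → Bool |
          ∑ i, ∑ j, (z i ^ 2 * z j ^ 2) *
            (if ω (min i j, max i j) then (1:ℝ) else 0) ≤ 9/10 * p} := by
        intro ω hω
        rw [Set.mem_compl_iff, hGB, Set.mem_setOf_eq, not_le] at hω
        exact hω.le
      exact (measure_mono hcsub).trans (tailB hd hp hp1 hμ hz2 hzn)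
    have hA2 : (d : ℝ≥0∞) * ENNReal.ofReal (Real.exp (-(p * d / (300 * μ ^ 2))))
        ≤ ENNReal.ofReal (1 / (2 * d)) := by
      rw [← ENNReal.ofReal_natCast d, ← ENNReal.ofReal_mul (by positivity)]
      apply ENNReal.ofReal_le_ofReal
      have hnum := numericA hd2 hμ1 hplb
      calc (d:ℝ) * Real.exp (-(p * d / (300 * μ ^ 2)))
          ≤ (d:ℝ) * (1 / (2 * (d:ℝ) ^ 2)) :=
            mul_le_mul_of_nonneg_left hnum hd0.le
        _ = 1 / (2 * d) := by field_simp
    have hB2 : ENNReal.ofReal (Real.exp (-(p * (d:ℝ) ^ 2 / (600 * μ ^ 4))))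
        ≤ ENNReal.ofReal (1 / (2 * d)) :=
      ENNReal.ofReal_le_ofReal (numericB hd2 hμ1 hplb)
    have hGc : ν ((GA ∩ GB)ᶜ) ≤ 1 / (d : ℝ≥0∞) := by
      rw [Set.compl_inter]
      calc ν (GAᶜ ∪ GBᶜ) ≤ ν GAᶜ + ν GBᶜ := measure_union_le _ _
        _ ≤ ENNReal.ofReal (1 / (2 * d)) + ENNReal.ofReal (1 / (2 * d)) :=
            add_le_add (hGAc.trans hA2) (hGBc.trans hB2)
        _ = ENNReal.ofReal (1 / d) := by
            rw [← ENNReal.ofReal_add (by positivity) (by positivity)]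
            congr 1
            rw [← add_div]
            rw [show (1:ℝ) + 1 = 2 by norm_num]
            rw [div_eq_div_iff (by positivity) (ne_of_gt hd0)]
            ring
        _ = 1 / (d : ℝ≥0∞) := by
            rw [one_div, one_div, ENNReal.ofReal_inv_of_pos hd0, ENNReal.ofReal_natCast]
    have hprob : IsProbabilityMeasure ν := by
      rw [hν, omegaMeasure]
      infer_instance
    have hGmeas : MeasurableSet (GA ∩ GB) := .of_discrete
    calc 1 - 1 / (d : ℝ≥0∞) ≤ ν (GA ∩ GB) := by
          rw [tsub_le_iff_right]
          have hcompl := measure_add_measure_compl (μ := ν) hGmeas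
          rw [hprob.measure_univ] at hcompl
          calc (1:ℝ≥0∞) = ν (GA ∩ GB) + ν ((GA ∩ GB)ᶜ) := hcompl.symm
            _ ≤ ν (GA ∩ GB) + 1 / (d : ℝ≥0∞) := add_le_add_right hGc _
      _ ≤ _ := measure_mono hsub
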